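/- For every θ ∈ Q_n, init(ξ(θ)) = init(θ); and for every normalized labeled binary tree Υ = (T, σ) ∈ Nor_n with leaf labels σ(1), …, σ(n) from left to right, init(γ̃(Υ)) = σ. -/

import Mathlib

/-! Colored labeled binary trees.  Leaf labels are positive integers; colors are
natural numbers (the paper's color set ℙ = {1,2,…} is identified with ℕ via j ↦ j-1,
i.e. color index `i : ℕ` represents the paper's color `i+1`). -/

inductive CTree : Type
  | leaf (label : ℕ) : CTree
  | node (color : ℕ) (l r : CTree) : CTree
deriving DecidableEq

namespace CTree

/-- leaf labels from left to right -/
def leavesList : CTree → List ℕ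
  | leaf m => [m]
  | node _ l r => leavesList l ++ leavesList r

/-- the valency `v(x)`: smallest leaf label of the subtree -/
def minLeaf : CTree → ℕ
  | leaf m => m
  | node _ l r => min (minLeaf l) (minLeaf r)

/-- a tree is normalized if in every subtree the leftmost leaf carries the
smallest leaf label of the subtree. -/
def Normalized : CTree → Prop
  | leaf _ => True
  | node _ l r => Normalized l ∧ Normalized r ∧ minLeaf l < minLeaf r

/-- number of internal nodes with color `j` -/
def colorCount : CTree → ℕ → ℕ
  | leaf _, _ => 0
  | node c l r, j => (if c = j then 1 else 0) + colorCount l j + colorCount r j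

def isLeafB : CTree → Bool
  | leaf _ => true
  | node _ _ _ => false

def left : CTree → CTree
  | leaf m => leaf m
  | node _ l _ => l

def right : CTree → CTree
  | leaf m => leaf m
  | node _ _ r => r

def rootColor : CTree → ℕ
  | leaf _ => 0
  | node c _ _ => c

/-- the root of `T` is a Lyndon node: either the left child is a leaf
or `v(R(L(x))) > v(R(x))`. (Leaves count as Lyndon.) -/
def RootLyndonB (T : CTree) : Bool :=
  isLeafB T || isLeafB (left T) || decide (minLeaf (right T) < minLeaf (right (left T)))

/-- colored Lyndon condition: every internal node that is not a Lyndon node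
satisfies `color(L(x)) > color(x)` -/
def LynColored : CTree → Prop
  | leaf _ => True
  | node c l r => LynColored l ∧ LynColored r ∧
      (RootLyndonB (node c l r) = true ∨ c < rootColor l)

/-- colored comb condition: every internal node whose right child is internal
satisfies `color(x) > color(R(x))` -/
def CombColored : CTree → Prop
  | leaf _ => True
  | node c l r => CombColored l ∧ CombColored r ∧ (isLeafB r = true ∨ rootColor r < c)

/-- all colors equal to `0`: an (essentially) uncolored tree. -/
def Mono : CTree → Prop
  | leaf _ => True
  | node c l r => c = 0 ∧ Mono l ∧ Mono r

/-- the tree has leaf label set `[n] = {1,…,n}` (each label once) -/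
def OnSet (n : ℕ) (T : CTree) : Prop := T.leavesList.Perm ((List.range n).map (· + 1))

/-- `lynAux T = (b, m)`: `b` is the size of the block of `π^{Lyn}` containing the
root (`0` for a leaf) and `m` is the multiset of sizes of the other blocks. -/
def lynAux : CTree → ℕ × Multiset ℕ
  | leaf _ => (0, 0)
  | node c l r =>
    let bl := (lynAux l).1
    let ml := (lynAux l).2
    let br := (lynAux r).1
    let mr := (lynAux r).2
    let closedR := mr + (if br = 0 then 0 else {br})
    if RootLyndonB (node c l r) then
      (1, ml + (if bl = 0 then 0 else {bl}) + closedR)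
    else (1 + bl, ml + closedR)

/-- the Lyndon type `λ^{Lyn}`: multiset of block sizes of `π^{Lyn}` -/
def lynType (T : CTree) : Multiset ℕ :=
  (if (lynAux T).1 = 0 then (0 : Multiset ℕ) else {(lynAux T).1}) + (lynAux T).2

def combAux : CTree → ℕ × Multiset ℕ
  | leaf _ => (0, 0)
  | node _ l r =>
    let bl := (combAux l).1
    let ml := (combAux l).2
    let br := (combAux r).1
    let mr := (combAux r).2
    (1 + br, ml + mr + (if bl = 0 then 0 else {bl}))

/-- the comb type `λ^{Comb}`: multiset of block sizes of `π^{Comb}` -/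
def combType (T : CTree) : Multiset ℕ :=
  (if (combAux T).1 = 0 then (0 : Multiset ℕ) else {(combAux T).1}) + (combAux T).2

/-- subtrees (= nodes) of a tree -/
def subtreesC : CTree → List CTree
  | leaf m => [leaf m]
  | node c l r => node c l r :: (subtreesC l ++ subtreesC r)

end CTree

/-- normalized uncolored labeled binary trees on `[n]`: the set `Nor_n`. -/
def NorSet (n : ℕ) : Set CTree :=
  {T | T.OnSet n ∧ T.Normalized ∧ T.Mono}

/-- `Lyn_μ` for a weak composition `μ` (indexed by ℕ; `μ i` is the number of
internal nodes of color `i`). -/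
def LynSet (n : ℕ) (μ : ℕ →₀ ℕ) : Set CTree :=
  {T | T.OnSet n ∧ T.Normalized ∧ T.LynColored ∧ ∀ j, T.colorCount j = μ j}

/-- `Comb_μ` -/
def CombSet (n : ℕ) (μ : ℕ →₀ ℕ) : Set CTree :=
  {T | T.OnSet n ∧ T.Normalized ∧ T.CombColored ∧ ∀ j, T.colorCount j = μ j}

/-- `Lyn_μ` for `μ ∈ wcomp` with support in `[k]`, given as `f : Fin k → ℕ`. -/
def LynSetF (n k : ℕ) (f : Fin k → ℕ) : Set CTree :=
  {T | T.OnSet n ∧ T.Normalized ∧ T.LynColored ∧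
    ∀ j : ℕ, T.colorCount j = if h : j < k then f ⟨j, h⟩ else 0}

def CombSetF (n k : ℕ) (f : Fin k → ℕ) : Set CTree :=
  {T | T.OnSet n ∧ T.Normalized ∧ T.CombColored ∧
    ∀ j : ℕ, T.colorCount j = if h : j < k then f ⟨j, h⟩ else 0}

/-! Stirling permutations, as lists of natural numbers. -/

/-- `w` is a Stirling permutation on the finite set `A` of positive integers:
every letter of `A` occurs exactly twice, no other letter occurs, and every
letter lying strictly between the two occurrences of a letter `a` is larger
than `a`. -/
def IsStirling (A : Finset ℕ) (w : List ℕ) : Prop :=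
  (∀ a, w.count a = if a ∈ A then 2 else 0) ∧
  (∀ a b : ℕ, ∀ i l j : ℕ, i < l → l < j → w[i]? = some a → w[j]? = some a →
      w[l]? = some b → a < b)

/-- the set `Q_A` of Stirling permutations on `A` -/
def QSetA (A : Finset ℕ) : Set (List ℕ) := {w | IsStirling A w}

/-- the set `Q_m` of Stirling permutations on `[m]` -/
def QSet (m : ℕ) : Set (List ℕ) := QSetA (Finset.Icc 1 m)

/-- `(a,b)` is an ascending adjacent pair of `w`: `a < b` and the second
occurrence of `a` immediately precedes the first occurrence of `b`. -/
def AApair (w : List ℕ) (a b : ℕ) : Prop :=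
  a < b ∧ ∃ i, w[i]? = some a ∧ w[i+1]? = some b ∧
    (w.take (i+1)).count a = 2 ∧ (w.take (i+1)).count b = 0

/-- `(a,b)` is a terminally nested pair of `w`: `a < b` and the second
occurrence of `a` immediately follows the second occurrence of `b`. -/
def TNpair (w : List ℕ) (a b : ℕ) : Prop :=
  a < b ∧ ∃ i, w[i]? = some b ∧ w[i+1]? = some a ∧
    (w.take (i+1)).count b = 2 ∧ (w.take (i+2)).count a = 2

-- Given a relation `R` on letters which is a partial matching (as `AApair w`
-- and `TNpair w` are), the multiset of sizes of the blocks of the partition of `A`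
-- generated by `R`, i.e. the multiset of lengths of the maximal `R`-chains.
-- This gives the types `λ^{AA}` and `λ^{TN}` of a Stirling permutation.
open Classical in
noncomputable def chainType (A : Finset ℕ) (R : ℕ → ℕ → Prop) : Multiset ℕ :=
  ((A.image fun a => A.filter fun b => Relation.EqvGen R a b).val.map Finset.card)

/-- splits off the first block `a τ a` of a Stirling permutation. -/
def blockSplit (w : List ℕ) : List ℕ × List ℕ :=
  match w with
  | [] => ([], [])
  | a :: rest =>
    let i := rest.findIdx (· = a)
    (a :: rest.take (i+1), rest.drop (i+1))

/-- block factorization of a Stirling permutation (with fuel). -/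
def toBlocksAux : ℕ → List ℕ → List (List ℕ)
  | 0, _ => []
  | _+1, [] => []
  | f+1, w => (blockSplit w).1 :: toBlocksAux f (blockSplit w).2

def toBlocks (w : List ℕ) : List (List ℕ) := toBlocksAux w.length w

/-- splits a list of blocks at the first descent of the leading letters:
this gives the ascending adjacent factorization `θ = θ¹θ²`. -/
def splitAtDescent : List (List ℕ) → Option (List (List ℕ) × List (List ℕ))
  | [] => none
  | [_] => none
  | b :: b' :: rest =>
    if b'.headD 0 < b.headD 0 then some ([b], b' :: rest)
    else (splitAtDescent (b' :: rest)).map fun p => (b :: p.1, p.2)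

/-- the bijection `ξ : Q_A → Q_A` (with fuel).  On an irreducible AA-word
`a₁τ₁a₁ a₂τ₂a₂ ⋯ a_kτ_ka_k` it returns
`a₁ξ(τ₁) a₂ξ(τ₂) ⋯ a_{k-1}ξ(τ_{k-1}) a_k a_k a_{k-1} ⋯ a₂ a₁ ξ(τ_k)`, and it is
multiplicative on the complete ascending adjacent factorization. -/
def xiAux : ℕ → List ℕ → List ℕ
  | 0, w => w
  | f+1, w =>
    let bs := toBlocks w
    match splitAtDescent bs with
    | some p => xiAux f p.1.flatten ++ xiAux f p.2.flatten
    | none =>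
      match bs with
      | [] => []
      | _ =>
        let heads := bs.map fun b => b.headD 0
        let inners := bs.map fun b => (b.drop 1).dropLast
        (List.zipWith (fun a τ => a :: xiAux f τ) heads.dropLast inners.dropLast).flatten
          ++ (heads.getLastD 0 :: heads.reverse) ++ xiAux f (inners.getLastD [])

def xiMap (w : List ℕ) : List ℕ := xiAux (w.length + 1) w

/-- the subword of first occurrences of the letters of `w` (with fuel). -/
def initAux : ℕ → List ℕ → List ℕ
  | 0, _ => []
  | _+1, [] => []
  | f+1, a :: rest => a :: initAux f (rest.filter (· ≠ a))

/-- the initial permutation `init(θ)` -/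
def initPerm (w : List ℕ) : List ℕ := initAux w.length w

namespace CTree

/-- the map `γ̃ : Nor_A → Q̂_A` (recursive definition). -/
def gammaT : CTree → List ℕ
  | leaf m => [m, m]
  | node _ l r => (gammaT l).dropLast ++ gammaT r ++ [minLeaf l]

end CTree

lemma initAux_nil (f : ℕ) : initAux f [] = [] := by cases f <;> rfl

lemma initAux_congr : ∀ f g : ℕ, ∀ w : List ℕ, w.length ≤ f → w.length ≤ g →
    initAux f w = initAux g w := by
  intro f
  induction f with
  | zero => intro g w hf _; rw [List.length_eq_zero_iff.mp (Nat.le_zero.mp hf), initAux_nil, initAux_nil]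
  | succ f IH =>
    intro g w hf hg
    cases w with
    | nil => rw [initAux_nil, initAux_nil]
    | cons a rest =>
      cases g with
      | zero => simp at hg
      | succ g =>
        show a :: initAux f _ = a :: initAux g _
        congr 1
        exact IH g _ (le_trans (List.length_filter_le _ _) (Nat.lt_succ_iff.mp hf))
          (le_trans (List.length_filter_le _ _) (Nat.lt_succ_iff.mp hg))

lemma initPerm_nil : initPerm [] = [] := rfl

lemma initPerm_cons (a : ℕ) (w : List ℕ) :
    initPerm (a :: w) = a :: initPerm (w.filter (· ≠ a)) := by
  show a :: initAux w.length (w.filter (· ≠ a)) = _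
  congr 1
  exact initAux_congr _ _ _ (List.length_filter_le _ _) le_rfl

lemma filter_ne_filter_not_mem (a : ℕ) (u v : List ℕ) :
    (v.filter (· ≠ a)).filter (· ∉ u.filter (· ≠ a)) = v.filter (· ∉ a :: u) := by
  rw [List.filter_filter]
  apply List.filter_congr
  intro b _
  by_cases hb : b = a <;> by_cases hu : b ∈ u <;> simp [hb, hu, List.mem_filter]

lemma initPerm_append : ∀ (n : ℕ) (u v : List ℕ), u.length ≤ n →
    initPerm (u ++ v) = initPerm u ++ initPerm (v.filter (· ∉ u)) := by
  intro n
  induction n with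
  | zero =>
    intro u v hu
    rw [List.length_eq_zero_iff.mp (Nat.le_zero.mp hu)]
    simp [initPerm_nil]
  | succ n IH =>
    intro u v hu
    cases u with
    | nil => simp [initPerm_nil]
    | cons a u' =>
      rw [List.cons_append, initPerm_cons, initPerm_cons, List.filter_append,
        IH _ _ (le_trans (List.length_filter_le _ _) (Nat.lt_succ_iff.mp hu)),
        filter_ne_filter_not_mem]
      simp

lemma initPerm_append' (u v : List ℕ) :
    initPerm (u ++ v) = initPerm u ++ initPerm (v.filter (· ∉ u)) :=
  initPerm_append u.length u v le_rfl

lemma initPerm_append_subset (u v : List ℕ) (h : ∀ b ∈ v, b ∈ u) :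
    initPerm (u ++ v) = initPerm u := by
  rw [initPerm_append', List.filter_eq_nil_iff.mpr (by simpa using h), initPerm_nil,
    List.append_nil]

lemma initPerm_append_disj (u v : List ℕ) (h : ∀ b ∈ v, b ∉ u) :
    initPerm (u ++ v) = initPerm u ++ initPerm v := by
  rw [initPerm_append', List.filter_eq_self.mpr (by simpa using h)]

lemma initPerm_cons_not_mem (a : ℕ) (w : List ℕ) (h : a ∉ w) :
    initPerm (a :: w) = a :: initPerm w := by
  rw [initPerm_cons]
  congr 2
  apply List.filter_eq_self.mpr
  intro b hb
  simp only [decide_eq_true_eq]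
  exact fun hba => h (hba ▸ hb)

/-- nested-word structure of Stirling permutations -/
inductive NW : List ℕ → Prop
  | nil : NW []
  | cons (a : ℕ) (τ z : List ℕ) : NW τ → NW z → (∀ b ∈ τ, a < b) → a ∉ τ → a ∉ z →
      (∀ b ∈ τ, b ∉ z) → NW (a :: τ ++ a :: z)

lemma mem_first_split {a : ℕ} : ∀ {l : List ℕ}, a ∈ l → ∃ τ z, l = τ ++ a :: z ∧ a ∉ τ := by
  intro l
  induction l with
  | nil => intro h; simp at h
  | cons x l ih =>
    intro h
    by_cases hx : x = a
    · exact ⟨[], l, by rw [hx]; rfl, by simp⟩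
    · obtain ⟨τ, z, h1, h2⟩ := ih ((List.mem_cons.mp h).resolve_left fun he => hx he.symm)
      exact ⟨x :: τ, z, by rw [h1]; rfl, by simp [h2, Ne.symm hx]⟩

lemma NW_of_st : ∀ (N : ℕ) (w : List ℕ), w.length ≤ N →
    (∀ a ∈ w, w.count a = 2) →
    (∀ a b i l j : ℕ, i < l → l < j → w[i]? = some a → w[j]? = some a → w[l]? = some b → a < b) →
    NW w := by
  intro N
  induction N with
  | zero =>
    intro w hw _ _
    rw [List.length_eq_zero_iff.mp (Nat.le_zero.mp hw)]
    exact NW.nil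
  | succ N IH =>
    intro w hw h2 h3
    cases hwc : w with
    | nil => exact NW.nil
    | cons a rest =>
      subst hwc
      have hca : rest.count a = 1 := by
        have := h2 a (by simp)
        simp [List.count_cons] at this
        omega
      have har : a ∈ rest := by
        rw [← List.count_pos_iff]
        omega
      obtain ⟨τ, z, hrest, haτ⟩ := mem_first_split har
      subst hrest
      have haz : a ∉ z := by
        rw [← List.count_eq_zero]
        have h0 : τ.count a = 0 := List.count_eq_zero.mpr haτ
        simp [List.count_append, List.count_cons, h0] at hca ⊢
        omega
      -- index facts
      have hw0 : (a :: (τ ++ a :: z))[0]? = some a := by simp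
      have hwj : (a :: (τ ++ a :: z))[τ.length + 1]? = some a := by
        rw [List.getElem?_cons_succ, List.getElem?_append_right le_rfl]
        simp
      have hτidx : ∀ l' x, τ[l']? = some x → (a :: (τ ++ a :: z))[l' + 1]? = some x := by
        intro l' x hx
        have hlen : l' < τ.length := by
          obtain ⟨h, _⟩ := List.getElem?_eq_some_iff.mp hx
          exact h
        rw [List.getElem?_cons_succ, List.getElem?_append_left hlen]
        exact hx
      have hzidx : ∀ m x, z[m]? = some x → (a :: (τ ++ a :: z))[τ.length + 2 + m]? = some x := by
        intro m x hx
        have : τ.length + 2 + m = (τ.length + 1 + m) + 1 := by omega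
        rw [this, List.getElem?_cons_succ, List.getElem?_append_right (by omega)]
        have : τ.length + 1 + m - τ.length = m + 1 := by omega
        rw [this, List.getElem?_cons_succ]
        exact hx
      have hlt : ∀ b ∈ τ, a < b := by
        intro b hb
        obtain ⟨l', hl'⟩ := List.mem_iff_getElem?.mp hb
        have hlen : l' < τ.length := (List.getElem?_eq_some_iff.mp hl').1
        exact h3 a b 0 (l' + 1) (τ.length + 1) (by omega) (by omega) hw0 hwj (hτidx l' b hl')
      have hdisj : ∀ b ∈ τ, b ∉ z := by
        intro b hbτ hbz
        obtain ⟨l', hl'⟩ := List.mem_iff_getElem?.mp hbτ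
        obtain ⟨m, hm⟩ := List.mem_iff_getElem?.mp hbz
        have hlen : l' < τ.length := (List.getElem?_eq_some_iff.mp hl').1
        have : b < a := h3 b a (l' + 1) (τ.length + 1) (τ.length + 2 + m) (by omega) (by omega)
          (hτidx l' b hl') (hzidx m b hm) hwj
        exact absurd (hlt b hbτ) (by omega)
      have hwlen : (a :: (τ ++ a :: z)).length = τ.length + z.length + 2 := by simp; omega
      have hcnt : ∀ x, (a :: (τ ++ a :: z)).count x = (if x = a then 2 else 0) + τ.count x + z.count x := by
        intro x
        by_cases hx : x = a
        · subst hx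
          simp [List.count_append, List.count_cons, List.count_eq_zero.mpr haτ,
            List.count_eq_zero.mpr haz]
        · simp [List.count_append, List.count_cons, hx, Ne.symm hx]
      have hNWτ : NW τ := by
        apply IH τ (by rw [hwlen] at hw; omega)
        · intro x hx
          have hx2 := h2 x (by simp [hx])
          rw [hcnt] at hx2
          have hxa : ¬ x = a := by have := hlt x hx; omega
          have hxz : z.count x = 0 := List.count_eq_zero.mpr (hdisj x hx)
          simp [hxa, hxz] at hx2
          exact hx2
        · intro x y i l j hil hlj hxi hxj hyl
          exact h3 x y (i+1) (l+1) (j+1) (by omega) (by omega) (hτidx i x hxi) (hτidx j x hxj)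
            (hτidx l y hyl)
      have hNWz : NW z := by
        apply IH z (by rw [hwlen] at hw; omega)
        · intro x hx
          have hx2 := h2 x (by simp [hx])
          rw [hcnt] at hx2
          have hxa : ¬ x = a := fun h => haz (h ▸ hx)
          have hxτ : τ.count x = 0 := List.count_eq_zero.mpr (fun hc => hdisj x hc hx)
          simp [hxa, hxτ] at hx2
          exact hx2
        · intro x y i l j hil hlj hxi hxj hyl
          exact h3 x y (τ.length + 2 + i) (τ.length + 2 + l) (τ.length + 2 + j) (by omega)
            (by omega) (hzidx i x hxi) (hzidx j x hxj) (hzidx l y hyl)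
      exact NW.cons a τ z hNWτ hNWz hlt haτ haz hdisj

/-- well-formed block decompositions -/
inductive GoodBlocks : List (List ℕ) → Prop
  | nil : GoodBlocks []
  | cons (a : ℕ) (τ : List ℕ) (bs : List (List ℕ)) : NW τ → (∀ b ∈ τ, a < b) → a ∉ τ →
      (∀ b ∈ (a :: (τ ++ [a])), b ∉ bs.flatten) → GoodBlocks bs →
      GoodBlocks ((a :: (τ ++ [a])) :: bs)

lemma findIdx_append_of_not {p : ℕ → Bool} : ∀ (τ l : List ℕ), (∀ x ∈ τ, ¬ p x) →
    List.findIdx p (τ ++ l) = τ.length + List.findIdx p l := by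
  intro τ
  induction τ with
  | nil => intro l _; simp
  | cons x τ ih =>
    intro l h
    rw [List.cons_append, List.findIdx_cons]
    have hx : p x = false := by simpa using h x (by simp)
    rw [hx]
    simp [ih l (fun y hy => h y (by simp [hy]))]
    omega

lemma blockSplit_NW (a : ℕ) (τ z : List ℕ) (haτ : a ∉ τ) :
    blockSplit (a :: (τ ++ a :: z)) = (a :: (τ ++ [a]), z) := by
  have hidx : List.findIdx (· = a) (τ ++ a :: z) = τ.length := by
    rw [findIdx_append_of_not τ (a :: z) (by intro x hx; simp; exact fun he => haτ (he ▸ hx))]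
    rw [List.findIdx_cons]
    simp
  show (a :: (τ ++ a :: z).take (List.findIdx (· = a) (τ ++ a :: z) + 1),
      (τ ++ a :: z).drop (List.findIdx (· = a) (τ ++ a :: z) + 1)) = _
  rw [hidx]
  have h1 : (τ ++ a :: z).take (τ.length + 1) = τ ++ [a] := by
    rw [List.take_append]
    simp
  have h2 : (τ ++ a :: z).drop (τ.length + 1) = z := by
    rw [List.drop_append]
    simp
  rw [h1, h2]

lemma blockSplit_append : ∀ w : List ℕ, (blockSplit w).1 ++ (blockSplit w).2 = w := by
  intro w
  cases w with
  | nil => rfl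
  | cons a rest =>
    show a :: (rest.take _ ++ rest.drop _) = a :: rest
    rw [List.take_append_drop]

lemma blockSplit_snd_len : ∀ (a : ℕ) (rest : List ℕ),
    (blockSplit (a :: rest)).2.length < (a :: rest).length := by
  intro a rest
  show (rest.drop _).length < rest.length + 1
  rw [List.length_drop]
  omega

lemma toBlocksAux_flatten : ∀ (f : ℕ) (w : List ℕ), w.length ≤ f →
    (toBlocksAux f w).flatten = w := by
  intro f
  induction f with
  | zero => intro w hw; rw [List.length_eq_zero_iff.mp (Nat.le_zero.mp hw)]; rfl
  | succ f ih =>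
    intro w hw
    cases w with
    | nil => rfl
    | cons a rest =>
      show ((blockSplit (a :: rest)).1 :: toBlocksAux f (blockSplit (a :: rest)).2).flatten = _
      rw [List.flatten_cons, ih _ (by have := blockSplit_snd_len a rest; omega),
        blockSplit_append]

lemma toBlocksAux_ne_nil : ∀ (f : ℕ) (w B : List ℕ), B ∈ toBlocksAux f w → B ≠ [] := by
  intro f
  induction f with
  | zero => intro w B h; simp [toBlocksAux] at h
  | succ f ih =>
    intro w B h
    cases w with
    | nil => simp [toBlocksAux] at h
    | cons a rest =>
      rcases List.mem_cons.mp h with h | h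
      · rw [h]; show a :: _ ≠ []; simp
      · exact ih _ B h

lemma good_of_NW : ∀ (w : List ℕ), NW w → ∀ f : ℕ, w.length ≤ f →
    GoodBlocks (toBlocksAux f w) ∧ (toBlocksAux f w).flatten = w := by
  intro w hw
  induction hw with
  | nil => intro f _; cases f <;> exact ⟨GoodBlocks.nil, rfl⟩
  | cons a τ z hτ hz hlt hat haz hdisj ihτ ihz =>
    intro f hf
    have hlen : (a :: τ ++ a :: z).length = τ.length + z.length + 2 := by simp; omega
    cases f with
    | zero => rw [hlen] at hf; omega
    | succ f =>
      have heq : toBlocksAux (f+1) (a :: τ ++ a :: z) =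
          (a :: (τ ++ [a])) :: toBlocksAux f z := by
        show (blockSplit (a :: (τ ++ a :: z))).1 :: toBlocksAux f (blockSplit (a :: (τ ++ a :: z))).2 =
          _
        rw [blockSplit_NW a τ z hat]
      rw [heq]
      obtain ⟨g1, g2⟩ := ihz f (by rw [hlen] at hf; omega)
      constructor
      · apply GoodBlocks.cons a τ _ hτ hlt hat _ g1
        rw [g2]
        intro b hb
        rcases List.mem_cons.mp hb with h | h
        · exact h ▸ haz
        · rcases List.mem_append.mp h with h | h
          · exact hdisj b h
          · simp at h; exact h ▸ haz
      · rw [List.flatten_cons, g2]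
        simp

lemma good_append : ∀ (bs1 bs2 : List (List ℕ)), GoodBlocks (bs1 ++ bs2) →
    GoodBlocks bs1 ∧ GoodBlocks bs2 := by
  intro bs1
  induction bs1 with
  | nil => intro bs2 h; exact ⟨GoodBlocks.nil, h⟩
  | cons B bs1 ih =>
    intro bs2 h
    rw [List.cons_append] at h
    cases h with
    | cons a τ _ hτ hlt hat hd hg =>
      obtain ⟨g1, g2⟩ := ih bs2 hg
      refine ⟨GoodBlocks.cons a τ _ hτ hlt hat ?_ g1, g2⟩
      intro b hb hbf
      exact hd b hb (by rw [List.flatten_append]; exact List.mem_append_left _ hbf)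

lemma good_disj : ∀ (bs1 bs2 : List (List ℕ)), GoodBlocks (bs1 ++ bs2) →
    ∀ b, b ∈ bs1.flatten → b ∈ bs2.flatten → False := by
  intro bs1
  induction bs1 with
  | nil => intro bs2 _ b h; simp at h
  | cons B bs1 ih =>
    intro bs2 h b hb1 hb2
    rw [List.cons_append] at h
    cases h with
    | cons a τ _ hτ hlt hat hd hg =>
      rw [List.flatten_cons] at hb1
      rcases List.mem_append.mp hb1 with h1 | h1
      · exact hd b h1 (by rw [List.flatten_append]; exact List.mem_append_right _ hb2)
      · exact ih bs2 hg b h1 hb2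

lemma good_flatten_NW : ∀ bs : List (List ℕ), GoodBlocks bs → NW bs.flatten := by
  intro bs h
  induction h with
  | nil => exact NW.nil
  | cons a τ bs hτ hlt hat hd hg ih =>
    rw [List.flatten_cons]
    have : (a :: (τ ++ [a])) ++ bs.flatten = a :: τ ++ a :: bs.flatten := by simp
    rw [this]
    exact NW.cons a τ bs.flatten hτ ih hlt hat (hd a (by simp))
      (fun b hb => hd b (by simp [hb]))

lemma good_flatten_len : ∀ bs : List (List ℕ), GoodBlocks bs → bs ≠ [] →
    2 ≤ bs.flatten.length := by
  intro bs h hne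
  cases h with
  | nil => exact absurd rfl hne
  | cons a τ bs hτ hlt hat hd hg => simp; omega

lemma split_some : ∀ (bs : List (List ℕ)) (p : List (List ℕ) × List (List ℕ)),
    splitAtDescent bs = some p → p.1 ++ p.2 = bs ∧ p.1 ≠ [] ∧ p.2 ≠ [] := by
  intro bs
  induction bs with
  | nil => intro p h; simp [splitAtDescent] at h
  | cons B bs ih =>
    intro p h
    cases bs with
    | nil => simp [splitAtDescent] at h
    | cons B' bs' =>
      rw [splitAtDescent] at h
      by_cases hc : B'.headD 0 < B.headD 0
      · rw [if_pos hc] at h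
        cases h
        exact ⟨rfl, by simp, by simp⟩
      · rw [if_neg hc] at h
        cases hq : splitAtDescent (B' :: bs') with
        | none => rw [hq] at h; simp at h
        | some q =>
          rw [hq] at h
          simp [Option.map] at h
          obtain ⟨h1, h2, h3⟩ := ih q hq
          cases h
          exact ⟨by simp [h1], by simp, h3⟩

def noneWord (f : ℕ) (bs : List (List ℕ)) : List ℕ :=
  (List.zipWith (fun a τ => a :: xiAux f τ) ((bs.map fun b => b.headD 0).dropLast)
      ((bs.map fun b => (b.drop 1).dropLast).dropLast)).flatten
    ++ ((bs.map fun b => b.headD 0).getLastD 0 :: (bs.map fun b => b.headD 0).reverse)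
    ++ xiAux f ((bs.map fun b => (b.drop 1).dropLast).getLastD [])

lemma xiAux_succ_some (f : ℕ) (w : List ℕ) (p : List (List ℕ) × List (List ℕ))
    (h : splitAtDescent (toBlocks w) = some p) :
    xiAux (f+1) w = xiAux f p.1.flatten ++ xiAux f p.2.flatten := by
  simp only [xiAux, h]

lemma xiAux_succ_none (f : ℕ) (w : List ℕ) (h : splitAtDescent (toBlocks w) = none)
    (hw : toBlocks w ≠ []) :
    xiAux (f+1) w = noneWord f (toBlocks w) := by
  simp only [xiAux, h, noneWord]

lemma xiAux_succ_nil (f : ℕ) (w : List ℕ) (h : splitAtDescent (toBlocks w) = none)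
    (hw : toBlocks w = []) : xiAux (f+1) w = [] := by
  simp only [xiAux, h, hw, splitAtDescent]

lemma initPerm_mid (x s y : List ℕ) (h : ∀ b ∈ s, b ∈ x) :
    initPerm (x ++ (s ++ y)) = initPerm (x ++ y) := by
  rw [initPerm_append', initPerm_append' x y, List.filter_append]
  have hs : s.filter (· ∉ x) = [] := List.filter_eq_nil_iff.mpr (by simpa using h)
  rw [hs, List.nil_append]

lemma filter_ne_of_not_mem (a : ℕ) (l : List ℕ) (h : a ∉ l) : l.filter (· ≠ a) = l :=
  List.filter_eq_self.mpr (fun b hb => by simp; exact fun he => h (he ▸ hb))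

lemma filter_ne_concat (a : ℕ) (l : List ℕ) : (l ++ [a]).filter (· ≠ a) = l.filter (· ≠ a) := by
  rw [List.filter_append]
  simp

lemma initPerm_block (a : ℕ) (τ : List ℕ) (hat : a ∉ τ) :
    initPerm (a :: (τ ++ [a])) = a :: initPerm τ := by
  rw [initPerm_cons, filter_ne_concat, filter_ne_of_not_mem a τ hat]

lemma headD_mem {α : Type*} (l : List α) (d : α) (h : l ≠ []) : l.headD d ∈ l := by
  cases l with
  | nil => exact absurd rfl h
  | cons x l => simp

lemma getLastD_indep {α : Type*} : ∀ (l : List α), l ≠ [] → ∀ d d', l.getLastD d = l.getLastD d' := by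
  intro l
  induction l with
  | nil => intro h; exact absurd rfl h
  | cons x l ih =>
    intro _ d d'
    cases l with
    | nil => rfl
    | cons y l => rfl

lemma getLastD_mem {α : Type*} : ∀ (l : List α), l ≠ [] → ∀ d, l.getLastD d ∈ l := by
  intro l
  induction l with
  | nil => intro h; exact absurd rfl h
  | cons x l ih =>
    intro _ d
    cases l with
    | nil => simp
    | cons y l' =>
      rw [List.getLastD_cons]
      exact List.mem_cons_of_mem x (ih (by simp) x)

lemma mem_zipflat (f : ℕ) : ∀ (xs : List ℕ) (ys : List (List ℕ)) (b : ℕ),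
    b ∈ (List.zipWith (fun a τ => a :: xiAux f τ) xs ys).flatten →
    (∃ x ∈ xs, b = x) ∨ ∃ τ ∈ ys, b ∈ xiAux f τ := by
  intro xs
  induction xs with
  | nil => intro ys b h; simp at h
  | cons x xs ih =>
    intro ys b h
    cases ys with
    | nil => simp at h
    | cons τ ys =>
      rw [List.zipWith_cons_cons, List.flatten_cons] at h
      rcases List.mem_append.mp h with h | h
      · rcases List.mem_cons.mp h with h | h
        · exact Or.inl ⟨x, by simp, h⟩
        · exact Or.inr ⟨τ, by simp, h⟩
      · rcases ih ys b h with ⟨x', hx', he⟩ | ⟨τ', hτ', he⟩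
        · exact Or.inl ⟨x', by simp [hx'], he⟩
        · exact Or.inr ⟨τ', by simp [hτ'], he⟩

lemma xiAux_nil : ∀ f : ℕ, xiAux f [] = [] := by
  intro f
  cases f with
  | zero => rfl
  | succ f => exact xiAux_succ_nil f [] rfl rfl

lemma xi_mem : ∀ (f : ℕ) (w : List ℕ) (b : ℕ), b ∈ xiAux f w → b ∈ w := by
  intro f
  induction f with
  | zero => intro w b h; exact h
  | succ f ih =>
    intro w b h
    have hfl : (toBlocks w).flatten = w := toBlocksAux_flatten _ _ le_rfl
    cases hs : splitAtDescent (toBlocks w) with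
    | some p =>
      rw [xiAux_succ_some f w p hs] at h
      obtain ⟨hpp, -, -⟩ := split_some _ p hs
      rw [← hfl, ← hpp, List.flatten_append]
      rcases List.mem_append.mp h with h | h
      · exact List.mem_append_left _ (ih _ b h)
      · exact List.mem_append_right _ (ih _ b h)
    | none =>
      cases hbs : toBlocks w with
      | nil => rw [xiAux_succ_nil f w hs hbs] at h; simp at h
      | cons B bs' =>
        rw [xiAux_succ_none f w hs (by rw [hbs]; simp)] at h
        have hne : toBlocks w ≠ [] := by rw [hbs]; simp
        have hBw : ∀ B' ∈ toBlocks w, ∀ x ∈ B', x ∈ w := by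
          intro B' hB' x hx
          rw [← hfl]
          exact List.mem_flatten.mpr ⟨B', hB', hx⟩
        have hhead : ∀ x ∈ (toBlocks w).map (fun b => b.headD 0), x ∈ w := by
          intro x hx
          obtain ⟨B', hB', rfl⟩ := List.mem_map.mp hx
          exact hBw B' hB' _ (headD_mem _ _ (toBlocksAux_ne_nil _ _ _ hB'))
        have hinner : ∀ τ ∈ (toBlocks w).map (fun b => (b.drop 1).dropLast), ∀ x ∈ τ, x ∈ w := by
          intro τ hτ x hx
          obtain ⟨B', hB', rfl⟩ := List.mem_map.mp hτ
          exact hBw B' hB' x (List.drop_subset 1 B' ((List.dropLast_sublist _).subset hx))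
        have hmapne : ∀ {β : Type} (g : List ℕ → β), (toBlocks w).map g ≠ [] := by
          intro β g hg
          rw [hbs] at hg
          simp at hg
        rw [noneWord] at h
        rcases List.mem_append.mp h with h | h
        · rcases List.mem_append.mp h with h | h
          · rcases mem_zipflat f _ _ b h with ⟨x, hx, he⟩ | ⟨τ, hτ, hbτ⟩
            · exact he.symm ▸ hhead x ((List.dropLast_sublist _).subset hx)
            · exact hinner τ ((List.dropLast_sublist _).subset hτ) b (ih _ b hbτ)
          · rcases List.mem_cons.mp h with h | h
            · exact h ▸ hhead _ (getLastD_mem _ (hmapne _) 0)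
            · exact hhead b (List.mem_reverse.mp h)
        · exact hinner _ (getLastD_mem _ (hmapne _) []) b (ih _ b h)

lemma uniq_block_decomp {a a' : ℕ} {τ τ' : List ℕ}
    (h : a :: (τ ++ [a]) = a' :: (τ' ++ [a'])) : a = a' ∧ τ = τ' := by
  have h1 : a = a' := by
    have := congrArg (fun l => List.headD l 0) h
    simpa using this
  subst h1
  refine ⟨rfl, ?_⟩
  have h2 : τ ++ [a] = τ' ++ [a] := by
    have := congrArg List.tail h
    simpa using this
  exact List.append_inj_left' h2 rfl

lemma len_le_flatten : ∀ (bs : List (List ℕ)) (B : List ℕ), B ∈ bs →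
    B.length ≤ bs.flatten.length := by
  intro bs B h
  obtain ⟨s, t, rfl⟩ := List.append_of_mem h
  rw [List.flatten_append, List.flatten_cons]
  simp
  omega

lemma filter_ne_cons_self (a : ℕ) (l : List ℕ) :
    (a :: l).filter (· ≠ a) = l.filter (· ≠ a) := by
  simp [List.filter_cons]

lemma noneWord_init (f : ℕ) : ∀ bs : List (List ℕ), GoodBlocks bs → bs ≠ [] →
    (∀ a τ, (a :: (τ ++ [a])) ∈ bs → initPerm (xiAux f τ) = initPerm τ) →
    (∀ b ∈ noneWord f bs, b ∈ bs.flatten) ∧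
      initPerm (noneWord f bs) = initPerm bs.flatten := by
  intro bs hg
  induction hg with
  | nil => intro h _; exact absurd rfl h
  | cons a τ bs hτ hlt hat hd hg ih =>
    intro _ H
    have hxiτ : ∀ b ∈ xiAux f τ, b ∈ τ := fun b hb => xi_mem f τ b hb
    have haxiτ : a ∉ xiAux f τ := fun hmem => hat (hxiτ a hmem)
    have hxiinit : initPerm (xiAux f τ) = initPerm τ := H a τ (by simp)
    cases bs with
    | nil =>
      have hW : noneWord f [a :: (τ ++ [a])] = a :: a :: xiAux f τ := by
        simp [noneWord, List.dropLast_concat]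
      have hfl : ([a :: (τ ++ [a])] : List (List ℕ)).flatten = a :: (τ ++ [a]) := by simp
      rw [hW, hfl]
      constructor
      · intro b hb
        rcases List.mem_cons.mp hb with hb | hb
        · simp [hb]
        rcases List.mem_cons.mp hb with hb | hb
        · simp [hb]
        · simp [hxiτ b hb]
      · rw [initPerm_block a τ hat, initPerm_cons, filter_ne_cons_self,
          filter_ne_of_not_mem a _ haxiτ, hxiinit]
    | cons C bs' =>
      obtain ⟨ihmem, ihinit⟩ := ih (by simp) (fun a' τ' hm => H a' τ' (List.mem_cons_of_mem _ hm))
      set Hs := (C :: bs').map (fun b => b.headD 0) with hHs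
      set Is := (C :: bs').map (fun b => (b.drop 1).dropLast) with hIs
      set Z := (List.zipWith (fun a τ => a :: xiAux f τ) Hs.dropLast Is.dropLast).flatten with hZ
      set hl := Hs.getLastD 0 with hhl
      set xiK := xiAux f (Is.getLastD []) with hK
      have hW' : noneWord f (C :: bs') = Z ++ (hl :: Hs.reverse) ++ xiK := rfl
      have hw1 : noneWord f ((a :: (τ ++ [a])) :: C :: bs') =
          ((a :: xiAux f τ) ++ (Z ++ (hl :: Hs.reverse))) ++ ([a] ++ xiK) := by
        simp [noneWord, hHs, hIs, hZ, hhl, hK, List.dropLast_concat]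
      have hdisjW : ∀ b ∈ noneWord f (C :: bs'), b ∉ (a :: (τ ++ [a])) := by
        intro b hb hbB
        exact hd b hbB (by rw [List.flatten_cons] at *; exact ihmem b hb)
      have hflc : ((a :: (τ ++ [a])) :: C :: bs').flatten
          = (a :: (τ ++ [a])) ++ (C :: bs').flatten := List.flatten_cons ..
      constructor
      · intro b hb
        rw [hw1] at hb
        rw [hflc]
        rcases List.mem_append.mp hb with hb | hb
        · rcases List.mem_append.mp hb with hb | hb
          · rcases List.mem_cons.mp hb with hb | hb
            · exact List.mem_append_left _ (by simp [hb])
            · exact List.mem_append_left _ (by simp [hxiτ b hb])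
          · refine List.mem_append_right _ (ihmem b ?_)
            rw [hW']
            exact List.mem_append_left _ (by exact hb)
        · rcases List.mem_append.mp hb with hb | hb
          · exact List.mem_append_left _ (by simp at hb; simp [hb])
          · refine List.mem_append_right _ (ihmem b ?_)
            rw [hW']
            exact List.mem_append_right _ hb
      · rw [hw1, hflc]
        have hmid : initPerm (((a :: xiAux f τ) ++ (Z ++ (hl :: Hs.reverse))) ++ ([a] ++ xiK))
            = initPerm (((a :: xiAux f τ) ++ (Z ++ (hl :: Hs.reverse))) ++ xiK) := by
          apply initPerm_mid
          intro b hb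
          simp at hb
          simp [hb]
        rw [hmid]
        have hx2 : ((a :: xiAux f τ) ++ (Z ++ (hl :: Hs.reverse))) ++ xiK
            = (a :: xiAux f τ) ++ noneWord f (C :: bs') := by
          rw [hW', List.append_assoc, List.append_assoc]
        rw [hx2]
        have hdisj2 : ∀ b ∈ noneWord f (C :: bs'), b ∉ (a :: xiAux f τ) := by
          intro b hb hbax
          rcases List.mem_cons.mp hbax with hbax | hbax
          · exact hdisjW b hb (by simp [hbax])
          · exact hdisjW b hb (by simp [hxiτ b hbax])
        rw [initPerm_append_disj _ _ hdisj2,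
          initPerm_append_disj _ _ (fun b hb hbB => hd b hbB hb),
          initPerm_cons_not_mem a _ haxiτ, hxiinit, initPerm_block a τ hat, ihinit]

lemma good_block_NW : ∀ bs : List (List ℕ), GoodBlocks bs → ∀ a τ,
    (a :: (τ ++ [a])) ∈ bs → NW τ := by
  intro bs hg
  induction hg with
  | nil => intro a τ h; simp at h
  | cons a' τ' bs h1 h2 h3 h4 h5 ih =>
    intro a τ h
    rcases List.mem_cons.mp h with h | h
    · obtain ⟨he, ht⟩ := uniq_block_decomp h
      exact ht ▸ h1
    · exact ih a τ h

lemma xi_init : ∀ (N : ℕ) (w : List ℕ), w.length ≤ N → NW w → ∀ f, w.length < f →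
    initPerm (xiAux f w) = initPerm w := by
  intro N
  induction N with
  | zero =>
    intro w hw _ f _
    rw [List.length_eq_zero_iff.mp (Nat.le_zero.mp hw), xiAux_nil]
  | succ N IH =>
    intro w hw hNW f hf
    cases f with
    | zero => omega
    | succ f =>
      obtain ⟨gb, hfl⟩ : GoodBlocks (toBlocks w) ∧ (toBlocks w).flatten = w :=
        good_of_NW w hNW w.length le_rfl
      cases hs : splitAtDescent (toBlocks w) with
      | some p =>
        rw [xiAux_succ_some f w p hs]
        obtain ⟨hpp, h1, h2⟩ := split_some _ p hs
        have gb' : GoodBlocks (p.1 ++ p.2) := hpp ▸ gb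
        obtain ⟨g1, g2⟩ := good_append p.1 p.2 gb'
        have hNW1 : NW p.1.flatten := good_flatten_NW _ g1
        have hNW2 : NW p.2.flatten := good_flatten_NW _ g2
        have hlen : p.1.flatten.length + p.2.flatten.length = w.length := by
          rw [← hfl, ← hpp, List.flatten_append, List.length_append]
        have hl1 : 2 ≤ p.1.flatten.length := good_flatten_len _ g1 h1
        have hl2 : 2 ≤ p.2.flatten.length := good_flatten_len _ g2 h2
        have hdisj : ∀ b ∈ p.2.flatten, b ∉ p.1.flatten :=
          fun b hb2 hb1 => good_disj p.1 p.2 gb' b hb1 hb2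
        have hi1 : initPerm (xiAux f p.1.flatten) = initPerm p.1.flatten :=
          IH _ (by omega) hNW1 f (by omega)
        have hi2 : initPerm (xiAux f p.2.flatten) = initPerm p.2.flatten :=
          IH _ (by omega) hNW2 f (by omega)
        have hdisjxi : ∀ b ∈ xiAux f p.2.flatten, b ∉ xiAux f p.1.flatten :=
          fun b hb2 hb1 => hdisj b (xi_mem _ _ _ hb2) (xi_mem _ _ _ hb1)
        rw [initPerm_append_disj _ _ hdisjxi, hi1, hi2, ← initPerm_append_disj _ _ hdisj,
          ← List.flatten_append, hpp, hfl]
      | none =>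
        cases hbs : toBlocks w with
        | nil =>
          rw [xiAux_succ_nil f w hs hbs]
          rw [hbs] at hfl
          rw [← hfl]
          rfl
        | cons B bs' =>
          rw [xiAux_succ_none f w hs (by rw [hbs]; simp)]
          have H : ∀ a τ, (a :: (τ ++ [a])) ∈ toBlocks w →
              initPerm (xiAux f τ) = initPerm τ := by
            intro a τ hmem
            have hblen : (a :: (τ ++ [a])).length ≤ w.length := by
              rw [← hfl]; exact len_le_flatten _ _ hmem
            simp at hblen
            have hNWτ : NW τ := good_block_NW _ gb a τ hmem
            exact IH τ (by omega) hNWτ f (by omega)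
          have := noneWord_init f (toBlocks w) gb (by rw [hbs]; simp) H
          rw [this.2, hfl]

lemma gamma_pack : ∀ T : CTree, T.Normalized → T.leavesList.Nodup →
    ∃ mid : List ℕ, CTree.gammaT T = T.minLeaf :: (mid ++ [T.minLeaf]) ∧
      (∀ b ∈ CTree.gammaT T, b ∈ T.leavesList) ∧
      initPerm (T.minLeaf :: mid) = T.leavesList := by
  intro T
  induction T with
  | leaf m =>
    intro _ _
    exact ⟨[], rfl, by simp [CTree.gammaT, CTree.leavesList, CTree.minLeaf], rfl⟩
  | node c l r ihl ihr =>
    intro hnorm hnodup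
    obtain ⟨hnl, hnr, hlt⟩ := hnorm
    have hleaves : (CTree.node c l r).leavesList = l.leavesList ++ r.leavesList := rfl
    rw [hleaves] at hnodup
    obtain ⟨hnd1, hnd2, hdisj⟩ := List.nodup_append.mp hnodup
    obtain ⟨midl, hgl, hmeml, hinitl⟩ := ihl hnl hnd1
    obtain ⟨midr, hgr, hmemr, hinitr⟩ := ihr hnr hnd2
    have hmin : (CTree.node c l r).minLeaf = l.minLeaf := by
      show min l.minLeaf r.minLeaf = l.minLeaf
      exact min_eq_left (le_of_lt hlt)
    have hdl : (CTree.gammaT l).dropLast = l.minLeaf :: midl := by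
      rw [hgl]
      have : l.minLeaf :: (midl ++ [l.minLeaf]) = (l.minLeaf :: midl) ++ [l.minLeaf] := rfl
      rw [this, List.dropLast_concat]
    have hgnode : CTree.gammaT (CTree.node c l r)
        = (l.minLeaf :: midl) ++ CTree.gammaT r ++ [l.minLeaf] := by
      show (CTree.gammaT l).dropLast ++ CTree.gammaT r ++ [l.minLeaf] = _
      rw [hdl]
    have hmlgl : l.minLeaf ∈ CTree.gammaT l := by rw [hgl]; simp
    have hmemnode : ∀ b ∈ CTree.gammaT (CTree.node c l r), b ∈ (CTree.node c l r).leavesList := by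
      intro b hb
      rw [hgnode] at hb
      rw [hleaves]
      rcases List.mem_append.mp hb with hb | hb
      · rcases List.mem_append.mp hb with hb | hb
        · refine List.mem_append_left _ (hmeml b ?_)
          rw [hgl]
          rcases List.mem_cons.mp hb with hb | hb
          · simp [hb]
          · simp [List.mem_append.mpr (Or.inl hb)]
        · exact List.mem_append_right _ (hmemr b hb)
      · simp at hb
        exact List.mem_append_left _ (hmeml b (hb ▸ hmlgl))
    refine ⟨midl ++ CTree.gammaT r, ?_, hmemnode, ?_⟩
    · rw [hgnode, hmin]
      simp [List.append_assoc]
    · rw [hmin, hleaves]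
      have h1 : l.minLeaf :: (midl ++ CTree.gammaT r)
          = (l.minLeaf :: midl) ++ CTree.gammaT r := rfl
      rw [h1]
      have hdisj2 : ∀ b ∈ CTree.gammaT r, b ∉ (l.minLeaf :: midl) := by
        intro b hb hbl
        have hbr : b ∈ r.leavesList := hmemr b hb
        have hbl' : b ∈ l.leavesList := by
          apply hmeml
          rw [hgl]
          rcases List.mem_cons.mp hbl with h | h
          · simp [h]
          · simp [List.mem_append.mpr (Or.inl h)]
        exact hdisj b hbl' b hbr rfl
      rw [initPerm_append_disj _ _ hdisj2, hinitl]
      congr 1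
      have h2 : CTree.gammaT r = (r.minLeaf :: midr) ++ [r.minLeaf] := by rw [hgr]; rfl
      rw [h2, initPerm_append_subset _ _ (by intro b hb; simp at hb; simp [hb]), hinitr]

/-- `ξ` preserves the initial permutation: `init(ξ(θ)) = init(θ)` for every
Stirling permutation `θ ∈ Q_n`; and for every normalized labeled binary tree
`Υ = (T,σ) ∈ Nor_n`, the initial permutation of `γ̃(Υ)` is the sequence
`σ = σ(1) ⋯ σ(n)` of leaf labels of `Υ` read from left to right. -/
theorem initPerm_xi_and_gammaT (n : ℕ) (hn : 1 ≤ n) :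
    (∀ w ∈ QSet n, initPerm (xiMap w) = initPerm w) ∧
      (∀ T ∈ NorSet n, initPerm (CTree.gammaT T) = CTree.leavesList T) := by
  constructor
  · intro w hw
    obtain ⟨hcnt, hbet⟩ := hw
    have hcnt2 : ∀ a ∈ w, w.count a = 2 := by
      intro a ha
      have h := hcnt a
      have hpos : 0 < w.count a := List.count_pos_iff.mpr ha
      by_cases hA : a ∈ Finset.Icc 1 n
      · rw [h, if_pos hA]
      · rw [h, if_neg hA] at hpos; omega
    have hNW : NW w := NW_of_st w.length w le_rfl hcnt2 hbet
    exact xi_init w.length w le_rfl hNW (w.length + 1) (by omega)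
  · intro T hT
    obtain ⟨hOn, hNorm, hMono⟩ := hT
    have hnodup : T.leavesList.Nodup := by
      refine (hOn.nodup_iff).mpr ?_
      exact List.Nodup.map (fun a b hab => by omega) (List.nodup_range (n := n))
    obtain ⟨mid, hg, hmem, hinit⟩ := gamma_pack T hNorm hnodup
    rw [hg]
    have h1 : T.minLeaf :: (mid ++ [T.minLeaf])
        = (T.minLeaf :: mid) ++ [T.minLeaf] := rfl
    rw [h1, initPerm_append_subset _ _ (by intro b hb; simp at hb; simp [hb]), hinit]
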